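/- arXiv:1002.4770 — 7 statements merged into one kernel-verified Lean document; each statement's English description precedes it below -/
import Mathlib

section
/- For every integer x with ⌈m⌉ ≤ x ≤ min(n, R): P(X ≥ x)·P(X = ⌈m⌉) ≤ P(X = x); that is, P(X ≥ x) ≤ P(X = x)/P(X = ⌈m⌉). -/
/-- The hypergeometric probability mass function:
`P(X = k) = C(R,k)·C(N−R, n−k)/C(N,n)`, where binomial coefficients are `0`
outside their natural range (so the pmf vanishes for `k < 0` and `k > n`). -/
noncomputable def hypPMF (N R n : ℕ) (k : ℤ) : ℝ :=
  if 0 ≤ k ∧ k ≤ (n : ℤ) then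
    ((R.choose k.toNat : ℝ) * ((N - R).choose (n - k.toNat) : ℝ)) / (N.choose n : ℝ)
  else 0

/-- Bernoulli Kullback–Leibler divergence, with the convention `0·log 0 = 0`
(automatic since `Real.log 0 = 0`). -/
noncomputable def bernKL (u p : ℝ) : ℝ :=
  u * Real.log (u / p) + (1 - u) * Real.log ((1 - u) / (1 - p))

/-- The log-likelihood-ratio functional
`L(x) = n·(p̂ log(p̂/p̄) + (1−p̂) log((1−p̂)/(1−p̄))) + (N−n)·(q̂ log(q̂/p̄) + (1−q̂) log((1−q̂)/(1−p̄)))`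
with `p̄ = R/N`, `p̂ = x/n`, `q̂ = (R−x)/(N−n)`. -/
noncomputable def Lfun (N R n : ℕ) (x : ℝ) : ℝ :=
  (n : ℝ) * bernKL (x / n) ((R : ℝ) / N) +
    ((N : ℝ) - n) * bernKL (((R : ℝ) - x) / ((N : ℝ) - n)) ((R : ℝ) / N)

/-- The constant `C = 2·exp((13/(12·p̄·(1−p̄)))·(1/n + 1/(N−n)))` with `p̄ = R/N`. -/
noncomputable def Cconst (N R n : ℕ) : ℝ :=
  2 * Real.exp (13 / (12 * ((R : ℝ) / N) * (1 - (R : ℝ) / N)) * (1 / (n : ℝ) + 1 / ((N : ℝ) - n)))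


lemma choose_step (M a b : ℕ) (h : a + 1 ≤ b) :
    M.choose a * M.choose b ≤ M.choose (a+1) * M.choose (b-1) := by
  have hb : b - 1 + 1 = b := by omega
  have e1 : M.choose (a+1) * (a+1) = M.choose a * (M - a) := Nat.choose_succ_right_eq M a
  have e2 := Nat.choose_succ_right_eq M (b-1)
  rw [hb] at e2
  have key : (a+1) * (M - (b-1)) ≤ b * (M - a) :=
    Nat.mul_le_mul h (by omega)
  apply Nat.le_of_mul_le_mul_right _ (Nat.mul_pos (Nat.succ_pos a) (show 0 < b by omega))
  calc M.choose a * M.choose b * ((a+1)*b)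
      = (M.choose a * (a+1)) * (M.choose b * b) := by ring
    _ = (M.choose a * (a+1)) * (M.choose (b-1) * (M-(b-1))) := by rw [e2]
    _ = (M.choose a * M.choose (b-1)) * ((a+1) * (M-(b-1))) := by ring
    _ ≤ (M.choose a * M.choose (b-1)) * (b * (M-a)) := Nat.mul_le_mul (le_refl _) key
    _ = (M.choose a * (M-a)) * (M.choose (b-1) * b) := by ring
    _ = (M.choose (a+1) * (a+1)) * (M.choose (b-1) * b) := by rw [e1]
    _ = M.choose (a+1) * M.choose (b-1) * ((a+1)*b) := by ring

lemma choose_slide (M : ℕ) : ∀ (j a b : ℕ), a + j ≤ b →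
    M.choose a * M.choose (b + j) ≤ M.choose (a + j) * M.choose b := by
  intro j
  induction j with
  | zero => intro a b _; simp
  | succ j ih =>
    intro a b h
    calc M.choose a * M.choose (b + (j+1))
        ≤ M.choose (a+1) * M.choose (b + (j+1) - 1) := choose_step M a (b+(j+1)) (by omega)
      _ = M.choose (a+1) * M.choose (b + j) := by rw [show b + (j+1) - 1 = b + j by omega]
      _ ≤ M.choose (a + 1 + j) * M.choose b := ih (a+1) b (by omega)
      _ = M.choose (a + (j+1)) * M.choose b := by rw [show a+1+j = a+(j+1) by omega]

lemma nat_cross_aux (M₁ M₂ n c x x' k : ℕ) (hc : c ≤ x) (hxx : x ≤ x') (hk : x' ≤ k)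
    (hsum : c + k = x + x') (hkn : k ≤ n) :
    (M₁.choose k * M₂.choose (n-k)) * (M₁.choose c * M₂.choose (n-c)) ≤
    (M₁.choose x * M₂.choose (n-x)) * (M₁.choose x' * M₂.choose (n-x')) := by
  have h1 : M₁.choose c * M₁.choose k ≤ M₁.choose x * M₁.choose x' := by
    have h := choose_slide M₁ (x - c) c x' (by omega)
    rw [show x' + (x - c) = k by omega, show c + (x - c) = x by omega] at h
    exact h
  have h2 : M₂.choose (n-k) * M₂.choose (n-c) ≤ M₂.choose (n-x') * M₂.choose (n-x) := by
    have h := choose_slide M₂ (k - x') (n - k) (n - x) (by omega)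
    rw [show n - x + (k - x') = n - c by omega, show n - k + (k - x') = n - x' by omega] at h
    exact h
  calc (M₁.choose k * M₂.choose (n-k)) * (M₁.choose c * M₂.choose (n-c))
      = (M₁.choose c * M₁.choose k) * (M₂.choose (n-k) * M₂.choose (n-c)) := by ring
    _ ≤ (M₁.choose x * M₁.choose x') * (M₂.choose (n-x') * M₂.choose (n-x)) :=
        Nat.mul_le_mul h1 h2
    _ = (M₁.choose x * M₂.choose (n-x)) * (M₁.choose x' * M₂.choose (n-x')) := by ring

lemma nat_cross (M₁ M₂ n c x k : ℕ) (hcx : c ≤ x) (hxk : x ≤ k) (hkn : k ≤ n) :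
    (M₁.choose k * M₂.choose (n-k)) * (M₁.choose c * M₂.choose (n-c)) ≤
    (M₁.choose x * M₂.choose (n-x)) * (M₁.choose (c+k-x) * M₂.choose (n-(c+k-x))) := by
  rcases le_total x (c + k - x) with h | h
  · exact nat_cross_aux M₁ M₂ n c x (c+k-x) k hcx h (by omega) (by omega) hkn
  · have h' := nat_cross_aux M₁ M₂ n c (c+k-x) x k (by omega) h hxk (by omega) hkn
    exact le_of_le_of_eq h' (mul_comm _ _)


lemma hypPMF_nonneg (N R n : ℕ) (k : ℤ) : 0 ≤ hypPMF N R n k := by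
  unfold hypPMF
  split
  · positivity
  · exact le_refl 0

lemma hypPMF_cross (N R n : ℕ) (hnN : n ≤ N) (c x k : ℤ) (hc : 0 ≤ c) (hcx : c ≤ x)
    (hxk : x ≤ k) (hxn : x ≤ (n:ℤ)) :
    hypPMF N R n k * hypPMF N R n c ≤ hypPMF N R n x * hypPMF N R n (c + k - x) := by
  by_cases hkn : k ≤ (n:ℤ)
  · rw [hypPMF, hypPMF, hypPMF, hypPMF, if_pos ⟨by omega, hkn⟩, if_pos ⟨hc, by omega⟩,
      if_pos ⟨by omega, hxn⟩, if_pos ⟨by omega, by omega⟩]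
    have hD : (0:ℝ) < (N.choose n : ℝ) := by
      exact_mod_cast Nat.choose_pos hnN
    rw [div_mul_div_comm, div_mul_div_comm]
    refine div_le_div_of_nonneg_right ?_ (by positivity)
    have htn : (c + k - x).toNat = c.toNat + k.toNat - x.toNat := by omega
    rw [htn]
    exact_mod_cast nat_cross R (N-R) n c.toNat x.toNat k.toNat (by omega) (by omega) (by omega)
  · have hzero : hypPMF N R n k = 0 := by
      rw [hypPMF, if_neg (fun hcond => hkn hcond.2)]
    rw [hzero, zero_mul]
    exact mul_nonneg (hypPMF_nonneg N R n x) (hypPMF_nonneg N R n _)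

lemma hypPMF_total (N R n : ℕ) (hRN : R ≤ N) (hnN : n ≤ N) :
    ∑ k ∈ Finset.Icc (0:ℤ) (n:ℤ), hypPMF N R n k = 1 := by
  have h1 : ∑ k ∈ Finset.Icc (0:ℤ) (n:ℤ), hypPMF N R n k
      = ∑ j ∈ Finset.range (n+1),
          ((R.choose j : ℝ) * ((N - R).choose (n - j) : ℝ)) / (N.choose n : ℝ) := by
    refine Finset.sum_nbij' (fun k => k.toNat) (fun j => (j:ℤ)) ?_ ?_ ?_ ?_ ?_
    · intro k hk
      simp only [Finset.mem_Icc] at hk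
      simp only [Finset.mem_range]
      omega
    · intro j hj
      simp only [Finset.mem_range] at hj
      simp only [Finset.mem_Icc]
      omega
    · intro k hk
      simp only [Finset.mem_Icc] at hk
      exact Int.toNat_of_nonneg hk.1
    · intro j _
      simp
    · intro k hk
      simp only [Finset.mem_Icc] at hk
      rw [hypPMF, if_pos ⟨hk.1, hk.2⟩]
  have hV : ∑ j ∈ Finset.range (n+1), R.choose j * (N - R).choose (n - j) = N.choose n := by
    have hN : R + (N - R) = N := by omega
    conv_rhs => rw [← hN]
    rw [Nat.add_choose_eq, Finset.Nat.sum_antidiagonal_eq_sum_range_succ_mk]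
  have h2 : (∑ j ∈ Finset.range (n+1),
      ((R.choose j : ℝ) * ((N - R).choose (n - j) : ℝ))) = (N.choose n : ℝ) := by
    rw [← hV]
    push_cast
    ring
  rw [h1, ← Finset.sum_div, h2, div_self]
  exact_mod_cast (Nat.choose_pos hnN).ne'

/-- For every integer `x` with `⌈m⌉ ≤ x ≤ min(n, R)` where `m = nR/N`:
`P(X ≥ x)·P(X = ⌈m⌉) ≤ P(X = x)`, i.e. `P(X ≥ x) ≤ P(X = x)/P(X = ⌈m⌉)`. -/
theorem hypergeometric_tail_le_mode_ratio (N R n : ℕ) (hR1 : 1 ≤ R) (hRN : R < N)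
    (hn1 : 1 ≤ n) (hnN : n < N) (x : ℤ)
    (hxm : ⌈(n : ℝ) * R / N⌉ ≤ x) (hx : x ≤ min (n : ℤ) (R : ℤ)) :
    (∑' k : ℤ, Set.indicator {j : ℤ | x ≤ j} (hypPMF N R n) k) *
        hypPMF N R n ⌈(n : ℝ) * R / N⌉ ≤
      hypPMF N R n x := by
  have hNn : n ≤ N := le_of_lt hnN
  have hRleN : R ≤ N := le_of_lt hRN
  set c : ℤ := ⌈(n : ℝ) * R / N⌉ with hcdef
  have hc0 : 0 ≤ c := Int.ceil_nonneg (by positivity)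
  have hxn : x ≤ (n:ℤ) := le_trans hx (min_le_left _ _)
  have hvan : ∀ k ∉ Finset.Icc (0:ℤ) (n:ℤ),
      Set.indicator {j : ℤ | x ≤ j} (hypPMF N R n) k = 0 := by
    intro k hk
    simp only [Finset.mem_Icc, not_and_or, not_le] at hk
    rw [Set.indicator_apply]
    split
    · rw [hypPMF, if_neg (by omega)]
    · rfl
  rw [tsum_eq_sum hvan, Finset.sum_mul]
  have total : ∑ k ∈ Finset.Icc (0:ℤ) (n:ℤ), hypPMF N R n k = 1 := hypPMF_total N R n hRleN hNn
  calc ∑ k ∈ Finset.Icc (0:ℤ) (n:ℤ),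
        Set.indicator {j : ℤ | x ≤ j} (hypPMF N R n) k * hypPMF N R n c
      ≤ ∑ k ∈ Finset.Icc (0:ℤ) (n:ℤ), hypPMF N R n x * hypPMF N R n (c + k - x) := by
        apply Finset.sum_le_sum
        intro k _
        rw [Set.indicator_apply]
        split_ifs with h
        · exact hypPMF_cross N R n hNn c x k hc0 hxm h hxn
        · rw [zero_mul]
          exact mul_nonneg (hypPMF_nonneg N R n x) (hypPMF_nonneg N R n _)
    _ = hypPMF N R n x * ∑ k ∈ Finset.Icc (0:ℤ) (n:ℤ), hypPMF N R n (c + k - x) := by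
        rw [Finset.mul_sum]
    _ ≤ hypPMF N R n x * 1 := by
        refine mul_le_mul_of_nonneg_left ?_ (hypPMF_nonneg N R n x)
        have h2 : ∑ k ∈ Finset.Icc (0:ℤ) (n:ℤ), hypPMF N R n (c + k - x)
            = ∑ j ∈ (Finset.Icc (0:ℤ) (n:ℤ)).map (addRightEmbedding (c - x)), hypPMF N R n j := by
          rw [Finset.sum_map]
          apply Finset.sum_congr rfl
          intro k _
          congr 1
          simp [addRightEmbedding]
          ring
        rw [h2, Finset.map_add_right_Icc]
        have e3 : ∑ j ∈ Finset.Icc (0:ℤ) (n:ℤ), hypPMF N R n j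
            = ∑ j ∈ Finset.Icc (c - x) (n:ℤ), hypPMF N R n j := by
          refine Finset.sum_subset (Finset.Icc_subset_Icc (by omega) le_rfl) ?_
          intro j _ hj
          simp only [Finset.mem_Icc, not_and_or, not_le] at hj
          rw [hypPMF, if_neg (by omega)]
        calc ∑ j ∈ Finset.Icc (0 + (c - x)) ((n:ℤ) + (c - x)), hypPMF N R n j
            ≤ ∑ j ∈ Finset.Icc (c - x) (n:ℤ), hypPMF N R n j := by
              refine Finset.sum_le_sum_of_subset_of_nonneg
                (Finset.Icc_subset_Icc (by omega) (by omega)) ?_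
              intro j _ _
              exact hypPMF_nonneg N R n j
          _ = ∑ j ∈ Finset.Icc (0:ℤ) (n:ℤ), hypPMF N R n j := e3.symm
          _ = 1 := total
    _ = hypPMF N R n x := mul_one _
end

section
/- For every integer x with ⌈m⌉ ≤ x < min(n, R): log P(X = x) − log P(X = ⌈m⌉) ≤ −L(x) + L(⌈m⌉) + (1/2)·log( (⌈m⌉·(R−⌈m⌉)·(n−⌈m⌉)·(N−R−n+⌈m⌉)) / (x·(R−x)·(n−x)·(N−R−n+x)) ) + (1/(12·p̄·(1−p̄)))·(1/n + 1/(N−n)). -/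
section Aux
open Real Filter


private lemma mono_from_deriv {f f' : ℝ → ℝ}
    (hd : ∀ u, 1 ≤ u → HasDerivAt f (f' u) u)
    (h0 : ∀ u, 1 ≤ u → 0 ≤ f' u) {u : ℝ} (hu : 1 ≤ u) : f 1 ≤ f u := by
  have hmono : MonotoneOn f (Set.Ici (1:ℝ)) := by
    apply monotoneOn_of_deriv_nonneg (convex_Ici 1)
    · exact fun x hx => (hd x hx).continuousAt.continuousWithinAt
    · intro x hx
      rw [interior_Ici] at hx
      exact (hd x hx.le).differentiableAt.differentiableWithinAt
    · intro x hx
      rw [interior_Ici] at hx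
      rw [(hd x hx.le).deriv]
      exact h0 x hx.le
  exact hmono Set.self_mem_Ici hu hu

private lemma log_ge_pade {u : ℝ} (hu : 1 ≤ u) : 2*(u-1)/(u+1) ≤ Real.log u := by
  have h := mono_from_deriv (f := fun u => Real.log u - 2*(u-1)/(u+1))
    (f' := fun u => u⁻¹ - (2*(u+1) - 2*(u-1))/((u+1)^2)) ?_ ?_ hu
  · simpa using h
  · intro v hv
    have h1 : HasDerivAt Real.log v⁻¹ v := Real.hasDerivAt_log (by linarith)
    have h2 : HasDerivAt (fun u : ℝ => 2*(u-1)/(u+1))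
        ((2*1 * (v+1) - (2*(v-1))*1)/((v+1)^2)) v :=
      (((hasDerivAt_id v).sub_const 1).const_mul 2).div ((hasDerivAt_id v).add_const 1)
        (by linarith)
    have h2' : HasDerivAt (fun u : ℝ => 2*(u-1)/(u+1))
        ((2*(v+1) - 2*(v-1))/((v+1)^2)) v := by
      convert h2 using 1; ring
    exact h1.sub h2'
  · intro v hv
    have hv0 : (0:ℝ) < v := by linarith
    rw [sub_nonneg, div_le_iff₀ (by positivity), inv_eq_one_div, div_mul_eq_mul_div,
      le_div_iff₀ hv0]
    nlinarith [sq_nonneg (v-1)]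

private lemma log_le_pade {u : ℝ} (hu : 1 ≤ u) :
    Real.log u ≤ 2*(u-1)/(u+1) + (u-1)^3/(6*(u^2+u)) := by
  have h := mono_from_deriv
    (f := fun u => 2*(u-1)/(u+1) + (u-1)^3/(6*(u^2+u)) - Real.log u)
    (f' := fun v => (2*(v+1) - 2*(v-1))/((v+1)^2)
      + ((3*(v-1)^2)*(6*(v^2+v)) - (v-1)^3*(6*(2*v+1)))/((6*(v^2+v))^2) - v⁻¹) ?_ ?_ hu
  · simp only [sub_self] at h
    norm_num at h
    linarith [h]
  · intro v hv
    have hv0 : (0:ℝ) < v := by linarith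
    have h1 : HasDerivAt Real.log v⁻¹ v := Real.hasDerivAt_log (by linarith)
    have h2 : HasDerivAt (fun u : ℝ => 2*(u-1)/(u+1)) ((2*(v+1) - 2*(v-1))/((v+1)^2)) v := by
      have := (((hasDerivAt_id v).sub_const 1).const_mul 2).div
        ((hasDerivAt_id v).add_const 1) (by linarith : v + 1 ≠ 0)
      refine this.congr_deriv ?_; simp only [id_eq]; ring
    have h3 : HasDerivAt (fun u : ℝ => (u-1)^3/(6*(u^2+u)))
        (((3*(v-1)^2)*(6*(v^2+v)) - (v-1)^3*(6*(2*v+1)))/((6*(v^2+v))^2)) v := by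
      have hnum : HasDerivAt (fun u : ℝ => (u-1)^3) (3*(v-1)^2) v := by
        have := ((hasDerivAt_id v).sub_const 1).pow 3
        refine this.congr_deriv ?_; simp only [id_eq]; ring
      have hden : HasDerivAt (fun u : ℝ => 6*(u^2+u)) (6*(2*v+1)) v := by
        have := (((hasDerivAt_pow 2 v)).add (hasDerivAt_id v)).const_mul (6:ℝ)
        refine this.congr_deriv ?_
        norm_num
      exact hnum.div hden (by nlinarith)
    exact (h2.add h3).sub h1
  · intro v hv
    have hv0 : (0:ℝ) < v := by linarith
    have key : (2*(v+1) - 2*(v-1))/((v+1)^2)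
      + ((3*(v-1)^2)*(6*(v^2+v)) - (v-1)^3*(6*(2*v+1)))/((6*(v^2+v))^2) - v⁻¹
      = (v-1)^4/(6*v^2*(v+1)^2) := by
      have h1 : v + 1 ≠ 0 := by linarith
      have h2 : v ≠ 0 := by linarith
      field_simp
      ring
    rw [key]
    positivity

noncomputable def rr (j : ℕ) : ℝ :=
  Real.log (Nat.factorial j) - ((j:ℝ) * Real.log j - j + Real.log (2 * Real.pi * j) / 2)

lemma log_factorial_eq (j : ℕ) :
    Real.log (Nat.factorial j) = (j:ℝ) * Real.log j - j + Real.log (2 * Real.pi * j) / 2 + rr j := by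
  unfold rr; ring

lemma rr_step (j : ℕ) (hj : 1 ≤ j) :
    rr j - rr (j+1) = ((j:ℝ) + 1/2) * Real.log (((j:ℝ)+1)/(j:ℝ)) - 1 := by
  have hj0 : (0:ℝ) < (j:ℝ) := by exact_mod_cast hj
  have hj1 : (0:ℝ) < (j:ℝ) + 1 := by linarith
  have hfac : Real.log (Nat.factorial (j+1)) = Real.log ((j:ℝ)+1) + Real.log (Nat.factorial j) := by
    rw [Nat.factorial_succ]
    push_cast
    rw [Real.log_mul (by linarith) (by positivity)]
  have hl1 : Real.log (2 * Real.pi * ((j:ℝ)+1)) =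
      Real.log (2*Real.pi) + Real.log ((j:ℝ)+1) := by
    rw [Real.log_mul (by positivity) (by linarith)]
  have hl2 : Real.log (2 * Real.pi * (j:ℝ)) = Real.log (2*Real.pi) + Real.log (j:ℝ) := by
    rw [Real.log_mul (by positivity) (by positivity)]
  have hl3 : Real.log (((j:ℝ)+1)/(j:ℝ)) = Real.log ((j:ℝ)+1) - Real.log (j:ℝ) :=
    Real.log_div (by linarith) (by positivity)
  unfold rr
  push_cast
  rw [hfac, hl1, hl2, hl3]
  ring


lemma rr_step_nonneg (j : ℕ) (hj : 1 ≤ j) : rr (j+1) ≤ rr j := by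
  have hy : (1:ℝ) ≤ (j:ℝ) := by exact_mod_cast hj
  set y := (j:ℝ)
  have hy0 : (0:ℝ) < y := by linarith
  have hu : (1:ℝ) ≤ (y+1)/y := by rw [le_div_iff₀ hy0]; linarith
  have hA := log_ge_pade hu
  have heq : (y+1/2) * (2*((y+1)/y-1)/((y+1)/y+1)) = 1 := by
    field_simp
    ring
  have h2 : 1 ≤ (y+1/2) * Real.log ((y+1)/y) := by
    calc (1:ℝ) = (y+1/2) * (2*((y+1)/y-1)/((y+1)/y+1)) := heq.symm
    _ ≤ (y+1/2) * Real.log ((y+1)/y) := by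
        apply mul_le_mul_of_nonneg_left hA (by linarith)
  have := rr_step j hj
  have h3 : rr j - rr (j+1) = (y + 1/2) * Real.log ((y+1)/y) - 1 := this
  linarith

lemma rr_step_le (j : ℕ) (hj : 1 ≤ j) :
    rr j - rr (j+1) ≤ 1/(12*(j:ℝ)) - 1/(12*((j:ℝ)+1)) := by
  have hy : (1:ℝ) ≤ (j:ℝ) := by exact_mod_cast hj
  set y := (j:ℝ)
  have hy0 : (0:ℝ) < y := by linarith
  have hu : (1:ℝ) ≤ (y+1)/y := by rw [le_div_iff₀ hy0]; linarith
  have hA := log_le_pade hu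
  have heq : (y+1/2) * (2*((y+1)/y-1)/((y+1)/y+1) + ((y+1)/y-1)^3/(6*(((y+1)/y)^2+(y+1)/y)))
      = 1 + (1/(12*y) - 1/(12*(y+1))) := by
    field_simp
    ring
  have h2 : (y+1/2) * Real.log ((y+1)/y) ≤ 1 + (1/(12*y) - 1/(12*(y+1))) := by
    calc (y+1/2) * Real.log ((y+1)/y)
        ≤ (y+1/2) * (2*((y+1)/y-1)/((y+1)/y+1) + ((y+1)/y-1)^3/(6*(((y+1)/y)^2+(y+1)/y))) := by
          apply mul_le_mul_of_nonneg_left hA (by linarith)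
    _ = 1 + (1/(12*y) - 1/(12*(y+1))) := heq
  have h3 : rr j - rr (j+1) = (y + 1/2) * Real.log ((y+1)/y) - 1 := rr_step j hj
  linarith

lemma rr_eq_log_stirling (j : ℕ) (hj : 1 ≤ j) :
    rr j = Real.log (Stirling.stirlingSeq j) - Real.log (Real.sqrt Real.pi) := by
  have hj0 : (0:ℝ) < (j:ℝ) := by exact_mod_cast hj
  rw [Stirling.log_stirlingSeq_formula]
  have h1 : Real.log ((j:ℝ) / Real.exp 1) = Real.log (j:ℝ) - 1 := by
    rw [Real.log_div (by positivity) (Real.exp_ne_zero 1), Real.log_exp]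
  have h2 : Real.log (2 * Real.pi * (j:ℝ)) = Real.log (2*(j:ℝ)) + Real.log Real.pi := by
    rw [Real.log_mul (by positivity) (by positivity), Real.log_mul (by positivity) (by positivity),
      Real.log_mul (by positivity) (by positivity)]
    ring
  have h3 : Real.log (Real.sqrt Real.pi) = Real.log Real.pi / 2 :=
    Real.log_sqrt Real.pi_pos.le
  unfold rr
  rw [h1, h2, h3]
  ring

lemma rr_tendsto : Tendsto rr atTop (nhds 0) := by
  have h1 : Tendsto (fun j : ℕ => Real.log (Stirling.stirlingSeq j) - Real.log (Real.sqrt Real.pi))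
      atTop (nhds 0) := by
    have hpos : (0:ℝ) < Real.sqrt Real.pi := Real.sqrt_pos.mpr Real.pi_pos
    have hc : Tendsto (fun j : ℕ => Real.log (Stirling.stirlingSeq j)) atTop
        (nhds (Real.log (Real.sqrt Real.pi))) :=
      ((Real.continuousAt_log hpos.ne').tendsto).comp Stirling.tendsto_stirlingSeq_sqrt_pi
    simpa using hc.sub_const (Real.log (Real.sqrt Real.pi))
  apply h1.congr'
  filter_upwards [eventually_ge_atTop 1] with j hj
  exact (rr_eq_log_stirling j hj).symm

lemma rr_antitone {i j : ℕ} (hi : 1 ≤ i) (hij : i ≤ j) : rr j ≤ rr i := by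
  induction j with
  | zero => omega
  | succ k ih =>
    rcases Nat.lt_or_ge i (k+1) with h | h
    · have hk : i ≤ k := by omega
      exact le_trans (rr_step_nonneg k (by omega)) (ih hk)
    · have : i = k + 1 := by omega
      rw [this]

lemma rr_nonneg {j : ℕ} (hj : 1 ≤ j) : 0 ≤ rr j := by
  have ht : Tendsto (fun k : ℕ => rr (j + k)) atTop (nhds 0) :=
    rr_tendsto.comp (tendsto_atTop_atTop_of_monotone (fun _ _ h => by omega)
      (fun b => ⟨b, by omega⟩))
  exact le_of_tendsto ht (Eventually.of_forall fun k =>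
    rr_antitone hj (Nat.le_add_right j k))

lemma rr_sub_le {j : ℕ} (hj : 1 ≤ j) : ∀ k : ℕ,
    rr j - rr (j + k) ≤ 1/(12*(j:ℝ)) - 1/(12*((j:ℝ)+(k:ℝ))) := by
  intro k
  induction k with
  | zero => simp
  | succ l ih =>
    have hstep := rr_step_le (j + l) (by omega)
    have hcast : ((j + l : ℕ) : ℝ) = (j:ℝ) + (l:ℝ) := by push_cast; ring
    rw [hcast] at hstep
    have : j + (l+1) = (j + l) + 1 := by omega
    rw [this]
    push_cast
    push_cast at ih
    ring_nf
    ring_nf at ih hstep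
    linarith

lemma rr_le {j : ℕ} (hj : 1 ≤ j) : rr j ≤ 1/(12*(j:ℝ)) := by
  have hj0 : (0:ℝ) < (j:ℝ) := by exact_mod_cast hj
  have ht : Tendsto (fun k : ℕ => rr (j + k)) atTop (nhds 0) :=
    rr_tendsto.comp (tendsto_atTop_atTop_of_monotone (fun _ _ h => by omega)
      (fun b => ⟨b, by omega⟩))
  have h : rr j - 1/(12*(j:ℝ)) ≤ 0 := by
    apply ge_of_tendsto ht
    apply Eventually.of_forall
    intro k
    have := rr_sub_le hj k
    have hk0 : (0:ℝ) ≤ (k:ℝ) := Nat.cast_nonneg k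
    have : 1/(12*((j:ℝ)+(k:ℝ))) > 0 := by positivity
    linarith [rr_sub_le hj k]
  linarith

lemma lf_expand {m : ℕ} {x : ℝ} (hm : 1 ≤ m) (hx : (m:ℝ) = x) :
    Real.log (Nat.factorial m)
      = x * Real.log x - x + (Real.log (2*Real.pi) + Real.log x)/2 + rr m := by
  have hm0 : (0:ℝ) < (m:ℝ) := by exact_mod_cast hm
  rw [log_factorial_eq, Real.log_mul (by positivity) (by positivity), hx]

lemma log_choose {m k : ℕ} (h : k ≤ m) :
    Real.log (m.choose k) = Real.log (Nat.factorial m)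
      - Real.log (Nat.factorial k) - Real.log (Nat.factorial (m-k)) := by
  have key := Nat.choose_mul_factorial_mul_factorial h
  have : ((m.choose k : ℝ)) * (Nat.factorial k) * (Nat.factorial (m-k)) = Nat.factorial m := by
    exact_mod_cast congrArg (Nat.cast (R := ℝ)) key
  have hc : (0:ℝ) < (m.choose k : ℝ) := by exact_mod_cast Nat.choose_pos h
  have h1 : (0:ℝ) < (Nat.factorial k : ℝ) := by exact_mod_cast Nat.factorial_pos k
  have h2 : (0:ℝ) < (Nat.factorial (m-k) : ℝ) := by exact_mod_cast Nat.factorial_pos (m-k)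
  rw [← this, Real.log_mul (by positivity) (by positivity),
    Real.log_mul (by positivity) (by positivity)]
  ring

lemma log_div4 {a b c d : ℝ} (ha : 0 < a) (hb : 0 < b) (hc : 0 < c) (hd : 0 < d) :
    Real.log ((a/b)/(c/d)) = Real.log a - Real.log b - (Real.log c - Real.log d) := by
  rw [Real.log_div (by positivity) (by positivity), Real.log_div ha.ne' hb.ne',
    Real.log_div hc.ne' hd.ne']

lemma Lfun_expand (N R n : ℕ) (x : ℝ) (hx0 : 0 < x) (hxn : x < n) (hxR : x < R)
    (hRN : R < N) (hnN : n < N) (hd : 0 < (N:ℝ) - R - n + x) :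
    Lfun N R n x = x * Real.log x + ((R:ℝ) - x) * Real.log ((R:ℝ) - x)
      + ((n:ℝ) - x) * Real.log ((n:ℝ) - x)
      + ((N:ℝ) - R - n + x) * Real.log ((N:ℝ) - R - n + x)
      - (n:ℝ) * Real.log (n:ℝ) - ((N:ℝ) - n) * Real.log ((N:ℝ) - n)
      + (N:ℝ) * Real.log (N:ℝ) - (R:ℝ) * Real.log (R:ℝ)
      - ((N:ℝ) - R) * Real.log ((N:ℝ) - R) := by
  have hn0 : (0:ℝ) < n := lt_trans hx0 hxn
  have hR0 : (0:ℝ) < R := lt_trans hx0 hxR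
  have hNn : (n:ℝ) < N := by exact_mod_cast hnN
  have hRN' : (R:ℝ) < N := by exact_mod_cast hRN
  have hN0 : (0:ℝ) < N := lt_trans hn0 hNn
  have hNn0 : (0:ℝ) < (N:ℝ) - n := by linarith
  have hNR0 : (0:ℝ) < (N:ℝ) - R := by linarith
  have hRx : (0:ℝ) < (R:ℝ) - x := by linarith
  have hnx : (0:ℝ) < (n:ℝ) - x := by linarith
  have hne1 : (n:ℝ) ≠ 0 := hn0.ne'
  have hne2 : (N:ℝ) - n ≠ 0 := hNn0.ne'
  unfold Lfun bernKL
  rw [show (1:ℝ) - x/n = ((n:ℝ)-x)/n by field_simp,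
    show (1:ℝ) - (R:ℝ)/N = ((N:ℝ)-R)/N by field_simp,
    show (1:ℝ) - ((R:ℝ)-x)/((N:ℝ)-n) = ((N:ℝ)-R-n+x)/((N:ℝ)-n) by
      linear_combination -mul_inv_cancel₀ hne2,
    log_div4 hx0 hn0 hR0 hN0, log_div4 hnx hn0 hNR0 hN0,
    log_div4 hRx hNn0 hR0 hN0, log_div4 hd hNn0 hNR0 hN0]
  field_simp
  ring



lemma logPMF (N R n k : ℕ) (hk1 : 1 ≤ k) (hkR : k < R) (hkn : k < n)
    (hRN : R < N) (hnN : n < N) (hdk : R + n < N + k) :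
    Real.log (hypPMF N R n (k:ℤ)) =
      (rr R + rr (N-R) + rr n + rr (N-n) - rr N)
      + (1/2) * (Real.log (R:ℝ) + Real.log ((N:ℝ)-R) + Real.log (n:ℝ) + Real.log ((N:ℝ)-n)
          - Real.log (2*Real.pi) - Real.log (N:ℝ))
      - Lfun N R n (k:ℝ)
      - (1/2) * (Real.log (k:ℝ) + Real.log ((R:ℝ)-k) + Real.log ((n:ℝ)-k)
          + Real.log ((N:ℝ)-R-n+k))
      - (rr k + rr (R-k) + rr (n-k) + rr (N+k-R-n)) := by
  have hk0 : (0:ℝ) < k := by exact_mod_cast hk1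
  have hkR' : (k:ℝ) < R := by exact_mod_cast hkR
  have hkn' : (k:ℝ) < n := by exact_mod_cast hkn
  have hRN' : (R:ℝ) < N := by exact_mod_cast hRN
  have hnN' : (n:ℝ) < N := by exact_mod_cast hnN
  have hdk' : (0:ℝ) < (N:ℝ) - R - n + k := by
    have : ((R:ℝ) + n) < (N:ℝ) + k := by exact_mod_cast hdk
    linarith
  -- cast equalities
  have cRk : ((R-k : ℕ):ℝ) = (R:ℝ) - k := Nat.cast_sub hkR.le
  have cnk : ((n-k : ℕ):ℝ) = (n:ℝ) - k := Nat.cast_sub hkn.le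
  have cNR : ((N-R : ℕ):ℝ) = (N:ℝ) - R := Nat.cast_sub hRN.le
  have cNn : ((N-n : ℕ):ℝ) = (N:ℝ) - n := Nat.cast_sub hnN.le
  have cD : ((N+k-R-n : ℕ):ℝ) = (N:ℝ) - R - n + k := by
    rw [Nat.cast_sub (by omega : n ≤ N+k-R), Nat.cast_sub (by omega : R ≤ N+k)]
    push_cast; ring
  -- unfold hypPMF
  have hcond : (0:ℤ) ≤ (k:ℤ) ∧ (k:ℤ) ≤ (n:ℤ) := ⟨Int.natCast_nonneg k, by exact_mod_cast hkn.le⟩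
  have hval : hypPMF N R n (k:ℤ) =
      ((R.choose k : ℝ) * ((N - R).choose (n - k) : ℝ)) / (N.choose n : ℝ) := by
    rw [hypPMF, if_pos hcond, Int.toNat_natCast]
  have hc1 : (0:ℝ) < (R.choose k : ℝ) := by exact_mod_cast Nat.choose_pos hkR.le
  have hc2 : (0:ℝ) < ((N-R).choose (n-k) : ℝ) := by
    exact_mod_cast Nat.choose_pos (by omega : n - k ≤ N - R)
  have hc3 : (0:ℝ) < (N.choose n : ℝ) := by exact_mod_cast Nat.choose_pos hnN.le
  rw [hval, Real.log_div (by positivity) hc3.ne', Real.log_mul hc1.ne' hc2.ne',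
    log_choose hkR.le, log_choose (by omega : n - k ≤ N - R), log_choose hnN.le,
    show (N-R)-(n-k) = N+k-R-n by omega]
  rw [lf_expand hk1 rfl, lf_expand (by omega : 1 ≤ R-k) cRk, lf_expand (by omega : 1 ≤ n-k) cnk,
    lf_expand (by omega : 1 ≤ N+k-R-n) cD, lf_expand (by omega : 1 ≤ R) rfl,
    lf_expand (by omega : 1 ≤ N-R) cNR, lf_expand (by omega : 1 ≤ n) rfl,
    lf_expand (by omega : 1 ≤ N-n) cNn, lf_expand (by omega : 1 ≤ N) rfl]
  rw [Lfun_expand N R n (k:ℝ) hk0 hkn' hkR' hRN hnN hdk']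
  ring

end Aux

set_option maxHeartbeats 1000000 in
/-- Stirling-based bound: for every integer `x` with `⌈m⌉ ≤ x < min(n, R)` where `m = nR/N`:
`log P(X = x) − log P(X = ⌈m⌉) ≤ −L(x) + L(⌈m⌉)
  + (1/2)·log((⌈m⌉(R−⌈m⌉)(n−⌈m⌉)(N−R−n+⌈m⌉))/(x(R−x)(n−x)(N−R−n+x)))
  + (1/(12·p̄·(1−p̄)))·(1/n + 1/(N−n))`. -/
theorem hypPMF_log_ratio_bound (N R n : ℕ) (hR1 : 1 ≤ R) (hRN : R < N)
    (hn1 : 1 ≤ n) (hnN : n < N) (x : ℤ)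
    (hxm : ⌈(n : ℝ) * R / N⌉ ≤ x) (hx : x < min (n : ℤ) (R : ℤ)) :
    Real.log (hypPMF N R n x) - Real.log (hypPMF N R n ⌈(n : ℝ) * R / N⌉) ≤
      -Lfun N R n (x : ℝ) + Lfun N R n ((⌈(n : ℝ) * R / N⌉ : ℤ) : ℝ) +
        1 / 2 * Real.log
          (((⌈(n : ℝ) * R / N⌉ : ℝ) * ((R : ℝ) - ⌈(n : ℝ) * R / N⌉) *
              ((n : ℝ) - ⌈(n : ℝ) * R / N⌉) * ((N : ℝ) - R - n + ⌈(n : ℝ) * R / N⌉)) /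
            ((x : ℝ) * ((R : ℝ) - x) * ((n : ℝ) - x) * ((N : ℝ) - R - n + x))) +
        1 / (12 * ((R : ℝ) / N) * (1 - (R : ℝ) / N)) * (1 / (n : ℝ) + 1 / ((N : ℝ) - n)) := by
  have hN0 : (0:ℝ) < N := Nat.cast_pos.mpr (by omega)
  have hn0 : (0:ℝ) < n := by exact_mod_cast hn1
  have hR0 : (0:ℝ) < R := by exact_mod_cast hR1
  have hRN' : (R:ℝ) < N := by exact_mod_cast hRN
  have hnN' : (n:ℝ) < N := by exact_mod_cast hnN
  have hNn0 : (0:ℝ) < (N:ℝ) - n := by linarith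
  have hNR0 : (0:ℝ) < (N:ℝ) - R := by linarith
  have hm0 : (0:ℝ) < (n:ℝ) * R / N := by positivity
  have hc0 : (0:ℤ) < ⌈(n : ℝ) * R / N⌉ := Int.ceil_pos.mpr hm0
  -- naturals
  set c : ℤ := ⌈(n : ℝ) * R / N⌉ with hc_def
  obtain ⟨b, hb⟩ : ∃ b : ℕ, c = (b:ℤ) := ⟨c.toNat, (Int.toNat_of_nonneg hc0.le).symm⟩
  obtain ⟨a, ha⟩ : ∃ a : ℕ, x = (a:ℤ) := ⟨x.toNat, (Int.toNat_of_nonneg (by omega)).symm⟩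
  have hb1 : 1 ≤ b := by omega
  have hba : b ≤ a := by omega
  have haR : a < R := by
    have := (lt_min_iff.mp hx).2; omega
  have han : a < n := by
    have := (lt_min_iff.mp hx).1; omega
  have hbm : (n:ℝ) * R / N ≤ (b:ℝ) := by
    have := Int.le_ceil ((n:ℝ) * R / N)
    rw [← hc_def, hb] at this
    exact_mod_cast this
  have hbmN : (n:ℝ) * R ≤ (b:ℝ) * N := by
    rw [div_le_iff₀ hN0] at hbm; linarith
  have hRnNb : R + n < N + b := by
    have hr : (R:ℝ) + n < (N:ℝ) + b := by nlinarith
    exact_mod_cast hr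
  have hRnNa : R + n < N + a := by omega
  -- positivity of all real quantities
  have hbR : b < R := by omega
  have hbn : b < n := by omega
  have pb : (0:ℝ) < (b:ℝ) := by exact_mod_cast hb1
  have pa : (0:ℝ) < (a:ℝ) := Nat.cast_pos.mpr (by omega)
  have hbR' : (b:ℝ) < (R:ℝ) := Nat.cast_lt.mpr hbR
  have haR' : (a:ℝ) < (R:ℝ) := Nat.cast_lt.mpr haR
  have hbn' : (b:ℝ) < (n:ℝ) := Nat.cast_lt.mpr hbn
  have han' : (a:ℝ) < (n:ℝ) := Nat.cast_lt.mpr han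
  have pRb : (0:ℝ) < (R:ℝ) - b := by linarith
  have pRa : (0:ℝ) < (R:ℝ) - a := by linarith
  have pnb : (0:ℝ) < (n:ℝ) - b := by linarith
  have pna : (0:ℝ) < (n:ℝ) - a := by linarith
  have pDb : (0:ℝ) < (N:ℝ) - R - n + b := by
    have := Nat.cast_lt (α := ℝ) |>.mpr hRnNb
    push_cast at this
    linarith
  have pDa : (0:ℝ) < (N:ℝ) - R - n + a := by
    have := Nat.cast_lt (α := ℝ) |>.mpr hRnNa
    push_cast at this
    linarith
  -- the rr-sum bound
  have cDb : ((N+b-R-n:ℕ):ℝ) = (N:ℝ)-R-n+b := by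
    rw [Nat.cast_sub (by omega : n ≤ N+b-R), Nat.cast_sub (by omega : R ≤ N+b)]
    push_cast; ring
  have t1 : rr (R-b) ≤ rr (R-a) := rr_antitone (by omega) (by omega)
  have t2 : rr (n-b) ≤ rr (n-a) := rr_antitone (by omega) (by omega)
  have t3 : 0 ≤ rr a := rr_nonneg (by omega)
  have t4 : 0 ≤ rr (N+a-R-n) := rr_nonneg (by omega)
  have t5 : rr b ≤ 1/(12*(b:ℝ)) := rr_le hb1
  have t6 : rr (N+b-R-n) ≤ 1/(12*((N:ℝ)-R-n+b)) := by
    have := rr_le (j := N+b-R-n) (by omega)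
    rwa [cDb] at this
  have t7 : 1/(12*(b:ℝ)) ≤ 1/(12*((n:ℝ)*R/N)) :=
    one_div_le_one_div_of_le (by positivity) (by linarith)
  have t8 : 1/(12*((N:ℝ)-R-n+b)) ≤ 1/(12*(((N:ℝ)-n)*((N:ℝ)-R)/N)) := by
    apply one_div_le_one_div_of_le (by positivity)
    have h : ((N:ℝ)-n)*((N:ℝ)-R)/N ≤ (N:ℝ)-R-n+b := by
      rw [div_le_iff₀ hN0]; nlinarith [hbmN]
    linarith
  have hdiff : 1 / (12 * ((R:ℝ) / N) * (1 - (R:ℝ) / N)) * (1 / (n:ℝ) + 1 / ((N:ℝ) - n))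
      - (1/(12*((n:ℝ)*R/N)) + 1/(12*(((N:ℝ)-n)*((N:ℝ)-R)/N)))
      = (N:ℝ)*((n:ℝ)*((N:ℝ)-R)+(R:ℝ)*((N:ℝ)-n))/(12*n*R*((N:ℝ)-n)*((N:ℝ)-R)) := by
    have h1 : (1:ℝ) - (R:ℝ)/N = ((N:ℝ)-R)/N := by field_simp
    rw [h1]
    field_simp
    ring
  have hpos : (0:ℝ) ≤ (N:ℝ)*((n:ℝ)*((N:ℝ)-R)+(R:ℝ)*((N:ℝ)-n))/(12*n*R*((N:ℝ)-n)*((N:ℝ)-R)) := by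
    apply div_nonneg _ (by positivity)
    have : (0:ℝ) ≤ (n:ℝ)*((N:ℝ)-R)+(R:ℝ)*((N:ℝ)-n) := by nlinarith
    positivity
  have hrr : (rr b + rr (R-b) + rr (n-b) + rr (N+b-R-n))
      - (rr a + rr (R-a) + rr (n-a) + rr (N+a-R-n))
      ≤ 1 / (12 * ((R:ℝ) / N) * (1 - (R:ℝ) / N)) * (1 / (n:ℝ) + 1 / ((N:ℝ) - n)) := by
    linarith
  -- log of the quartic ratio
  have q1 : (0:ℝ) < (b:ℝ)*((R:ℝ)-b)*((n:ℝ)-b)*((N:ℝ)-R-n+b) :=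
    mul_pos (mul_pos (mul_pos pb pRb) pnb) pDb
  have q2 : (0:ℝ) < (a:ℝ)*((R:ℝ)-a)*((n:ℝ)-a)*((N:ℝ)-R-n+a) :=
    mul_pos (mul_pos (mul_pos pa pRa) pna) pDa
  have hlogq : Real.log (((b:ℝ) * ((R:ℝ)-b) * ((n:ℝ)-b) * ((N:ℝ)-R-n+b)) /
        ((a:ℝ) * ((R:ℝ)-a) * ((n:ℝ)-a) * ((N:ℝ)-R-n+a)))
      = (Real.log (b:ℝ) + Real.log ((R:ℝ)-b) + Real.log ((n:ℝ)-b) + Real.log ((N:ℝ)-R-n+b))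
        - (Real.log (a:ℝ) + Real.log ((R:ℝ)-a) + Real.log ((n:ℝ)-a) + Real.log ((N:ℝ)-R-n+a)) := by
    rw [Real.log_div q1.ne' q2.ne',
      Real.log_mul (by positivity : ((b:ℝ)*((R:ℝ)-b)*((n:ℝ)-b)) ≠ 0) pDb.ne',
      Real.log_mul (by positivity : ((b:ℝ)*((R:ℝ)-b)) ≠ 0) pnb.ne',
      Real.log_mul pb.ne' pRb.ne',
      Real.log_mul (by positivity : ((a:ℝ)*((R:ℝ)-a)*((n:ℝ)-a)) ≠ 0) pDa.ne',
      Real.log_mul (by positivity : ((a:ℝ)*((R:ℝ)-a)) ≠ 0) pna.ne',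
      Real.log_mul pa.ne' pRa.ne']
  rw [hb, ha]
  simp only [Int.cast_natCast]
  rw [logPMF N R n a (by omega) haR han hRN hnN hRnNa,
    logPMF N R n b hb1 hbR hbn hRN hnN hRnNb, hlogq]
  linarith
end

section
/- L(⌈m⌉) ≤ (1/(p̄·(1−p̄)))·(1/n + 1/(N−n)). -/
lemma bernKL_le_chisq (u p : ℝ) (hu0 : 0 ≤ u) (hu1 : u ≤ 1) (hp0 : 0 < p) (hp1 : p < 1) :
    bernKL u p ≤ (u - p)^2 / (p * (1 - p)) := by
  have hq0 : (0:ℝ) < 1 - p := by linarith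
  have h1 : u * Real.log (u / p) ≤ u * (u / p - 1) := by
    rcases eq_or_lt_of_le hu0 with h | h
    · simp [← h]
    · exact mul_le_mul_of_nonneg_left
        (Real.log_le_sub_one_of_pos (by positivity)) h.le
  have h2 : (1 - u) * Real.log ((1 - u) / (1 - p)) ≤ (1 - u) * ((1 - u) / (1 - p) - 1) := by
    rcases eq_or_lt_of_le (by linarith : (0:ℝ) ≤ 1 - u) with h | h
    · simp [← h]
    · exact mul_le_mul_of_nonneg_left
        (Real.log_le_sub_one_of_pos (by positivity)) h.le
  have key : u * (u / p - 1) + (1 - u) * ((1 - u) / (1 - p) - 1)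
      = (u - p)^2 / (p * (1 - p)) := by
    field_simp
    ring
  unfold bernKL
  linarith


set_option maxHeartbeats 1000000 in
/-- `L(⌈m⌉) ≤ (1/(p̄(1−p̄)))·(1/n + 1/(N−n))` where `m = nR/N` and `p̄ = R/N`. -/
theorem Lfun_ceil_mean_bound (N R n : ℕ) (hR1 : 1 ≤ R) (hRN : R < N)
    (hn1 : 1 ≤ n) (hnN : n < N) :
    Lfun N R n ((⌈(n : ℝ) * R / N⌉ : ℤ) : ℝ) ≤
      1 / (((R : ℝ) / N) * (1 - (R : ℝ) / N)) * (1 / (n : ℝ) + 1 / ((N : ℝ) - n)) := by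
  have hNpos : (0:ℝ) < N := by exact_mod_cast Nat.zero_lt_of_lt hRN
  have hnpos : (0:ℝ) < n := by exact_mod_cast hn1
  have hRpos : (0:ℝ) < R := by exact_mod_cast hR1
  have hRltN : (R:ℝ) < N := by exact_mod_cast hRN
  have hnltN : (n:ℝ) < N := by exact_mod_cast hnN
  have hNn : (0:ℝ) < (N:ℝ) - n := by linarith
  set m : ℝ := (n : ℝ) * R / N with hm
  set x : ℝ := ((⌈m⌉ : ℤ) : ℝ) with hx
  have hmx : m ≤ x := Int.le_ceil m
  have hxm1 : x < m + 1 := Int.ceil_lt_add_one m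
  have hmpos : 0 < m := by positivity
  have hmn : m ≤ n := by
    rw [hm, div_le_iff₀ hNpos]
    nlinarith
  have hmR : m ≤ R := by
    rw [hm, div_le_iff₀ hNpos]
    nlinarith
  have hxn : x ≤ n := by
    rw [hx]
    exact_mod_cast Int.ceil_le.mpr (by exact_mod_cast hmn : m ≤ ((n:ℤ):ℝ))
  have hxR : x ≤ R := by
    rw [hx]
    exact_mod_cast Int.ceil_le.mpr (by exact_mod_cast hmR : m ≤ ((R:ℤ):ℝ))
  have hx0 : 0 ≤ x := by linarith
  have hxlow : (n:ℝ) + R - N ≤ m := by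
    rw [hm, le_div_iff₀ hNpos]
    nlinarith
  set p : ℝ := (R:ℝ) / N with hp
  have hp0 : 0 < p := by positivity
  have hp1 : p < 1 := by rw [hp, div_lt_one hNpos]; exact hRltN
  set δ : ℝ := x - m with hδ
  have hδ0 : 0 ≤ δ := by linarith
  have hδ1 : δ ≤ 1 := by linarith
  -- u1 and u2
  have hu1a : (0:ℝ) ≤ x / n := by positivity
  have hu1b : x / n ≤ 1 := by rw [div_le_one hnpos]; exact hxn
  have hu2a : (0:ℝ) ≤ ((R:ℝ) - x) / ((N:ℝ) - n) := by
    apply div_nonneg (by linarith) hNn.le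
  have hu2b : ((R:ℝ) - x) / ((N:ℝ) - n) ≤ 1 := by
    rw [div_le_one hNn]; linarith
  have e1 : x / n - p = δ / n := by
    rw [hδ, hp, hm]; field_simp
  have e2 : ((R:ℝ) - x) / ((N:ℝ) - n) - p = -δ / ((N:ℝ) - n) := by
    rw [hδ, hp, hm]; field_simp; first | (ring_nf; tauto) | ring_nf | ring
  have b1 := bernKL_le_chisq (x / n) p hu1a hu1b hp0 hp1
  have b2 := bernKL_le_chisq (((R:ℝ) - x) / ((N:ℝ) - n)) p hu2a hu2b hp0 hp1
  rw [e1] at b1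
  rw [e2] at b2
  have hpp : 0 < p * (1 - p) := by nlinarith
  have main : (n:ℝ) * ((δ / n)^2 / (p * (1 - p))) +
      ((N:ℝ) - n) * ((-δ / ((N:ℝ) - n))^2 / (p * (1 - p)))
      ≤ 1 / (p * (1 - p)) * (1 / (n:ℝ) + 1 / ((N:ℝ) - n)) := by
    have heq : (n:ℝ) * ((δ / n)^2 / (p * (1 - p))) +
        ((N:ℝ) - n) * ((-δ / ((N:ℝ) - n))^2 / (p * (1 - p)))
        = δ^2 * (1 / (p * (1 - p)) * (1 / (n:ℝ) + 1 / ((N:ℝ) - n))) := by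
      field_simp
    rw [heq]
    have hpos : 0 ≤ 1 / (p * (1 - p)) * (1 / (n:ℝ) + 1 / ((N:ℝ) - n)) := by positivity
    have hδsq : δ^2 ≤ 1 := by nlinarith
    calc δ^2 * (1 / (p * (1 - p)) * (1 / (n:ℝ) + 1 / ((N:ℝ) - n)))
        ≤ 1 * (1 / (p * (1 - p)) * (1 / (n:ℝ) + 1 / ((N:ℝ) - n))) :=
          mul_le_mul_of_nonneg_right hδsq hpos
      _ = _ := one_mul _
  unfold Lfun
  calc (n : ℝ) * bernKL (x / n) p + ((N : ℝ) - n) * bernKL (((R:ℝ) - x) / ((N:ℝ) - n)) p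
      ≤ (n:ℝ) * ((δ / n)^2 / (p * (1 - p))) +
        ((N:ℝ) - n) * ((-δ / ((N:ℝ) - n))^2 / (p * (1 - p))) := by
        gcongr
    _ ≤ _ := main
end

section
/- The function x ↦ L(x) is strictly decreasing for x below m and strictly increasing for x above m: for all reals x₁, x₂ with max(0, n+R−N) ≤ x₁ < x₂ ≤ m one has L(x₁) > L(x₂), and for all reals x₁, x₂ with m ≤ x₁ < x₂ ≤ min(n, R) one has L(x₁) < L(x₂). -/
lemma bernKL_eq (p : ℝ) (hp : p ≠ 0) (hp1 : (1:ℝ) - p ≠ 0) (u : ℝ) :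
    bernKL u p = (u * Real.log u - u * Real.log p) +
      ((1 - u) * Real.log (1 - u) - (1 - u) * Real.log (1 - p)) := by
  unfold bernKL
  rcases eq_or_ne u 0 with h | h
  · simp [h, Real.log_div one_ne_zero hp1]
  rcases eq_or_ne (1 - u) 0 with h1 | h1
  · have hu : u = 1 := by linarith [sub_eq_zero.mp h1]
    simp [h1, hu, Real.log_div one_ne_zero hp]
  · rw [Real.log_div h hp, Real.log_div h1 hp1]; ring

lemma continuous_bernKL (p : ℝ) (hp : p ≠ 0) (hp1 : (1:ℝ) - p ≠ 0) :
    Continuous (fun u => bernKL u p) := by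
  have h := Real.continuous_mul_log
  have h2 : Continuous (fun u : ℝ => (1 - u) * Real.log (1 - u)) :=
    h.comp (continuous_const.sub continuous_id)
  have heq : (fun u => bernKL u p) = fun u =>
      (u * Real.log u - u * Real.log p) +
      ((1 - u) * Real.log (1 - u) - (1 - u) * Real.log (1 - p)) := by
    funext u; exact bernKL_eq p hp hp1 u
  rw [heq]
  exact ((h.sub (continuous_id.mul continuous_const)).add
    (h2.sub ((continuous_const.sub continuous_id).mul continuous_const)))

lemma hasDerivAt_bernKL {p u : ℝ} (hu : u ≠ 0) (hu1 : (1:ℝ) - u ≠ 0)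
    (hp : p ≠ 0) (hp1 : (1:ℝ) - p ≠ 0) :
    HasDerivAt (fun u => bernKL u p)
      (Real.log (u / p) - Real.log ((1 - u) / (1 - p))) u := by
  have h1 : u / p ≠ 0 := div_ne_zero hu hp
  have h2 : (1 - u) / (1 - p) ≠ 0 := div_ne_zero hu1 hp1
  have d1 : HasDerivAt (fun u : ℝ => Real.log (u / p)) ((u/p)⁻¹ * (1/p)) u :=
    ((Real.hasDerivAt_log h1).comp u ((hasDerivAt_id u).div_const p) :)
  have d2 : HasDerivAt (fun u : ℝ => u * Real.log (u / p))
      (1 * Real.log (u / p) + u * ((u/p)⁻¹ * (1/p))) u := (hasDerivAt_id u).mul d1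
  have d3 : HasDerivAt (fun u : ℝ => Real.log ((1 - u) / (1 - p)))
      (((1-u)/(1-p))⁻¹ * ((0 - 1)/(1-p))) u :=
    ((Real.hasDerivAt_log h2).comp u
      (((hasDerivAt_const u 1).sub (hasDerivAt_id u)).div_const (1-p)) :)
  have d4 : HasDerivAt (fun u : ℝ => (1 - u) * Real.log ((1 - u) / (1 - p)))
      ((0 - 1) * Real.log ((1-u)/(1-p)) + (1-u) * (((1-u)/(1-p))⁻¹ * ((0 - 1)/(1-p)))) u :=
    ((hasDerivAt_const u 1).sub (hasDerivAt_id u)).mul d3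
  have hsum := d2.add d4
  refine hsum.congr_deriv ?_
  field_simp
  ring

lemma hasDerivAt_Lfun (N R n : ℕ) (hn : (0:ℝ) < n) (hNn : (0:ℝ) < (N:ℝ) - n)
    {x : ℝ} (hx0 : x / n ≠ 0) (hx1 : (1:ℝ) - x / n ≠ 0)
    (hq0 : ((R:ℝ) - x) / ((N:ℝ) - n) ≠ 0) (hq1 : (1:ℝ) - ((R:ℝ) - x) / ((N:ℝ) - n) ≠ 0)
    (hp : (R:ℝ)/N ≠ 0) (hp1 : (1:ℝ) - (R:ℝ)/N ≠ 0) :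
    HasDerivAt (Lfun N R n)
      ((Real.log ((x/n) / ((R:ℝ)/N)) - Real.log ((1 - x/n) / (1 - (R:ℝ)/N))) -
       (Real.log ((((R:ℝ)-x)/((N:ℝ)-n)) / ((R:ℝ)/N)) -
        Real.log ((1 - ((R:ℝ)-x)/((N:ℝ)-n)) / (1 - (R:ℝ)/N)))) x := by
  set p := (R:ℝ)/N with hpdef
  have d1 : HasDerivAt (fun x : ℝ => bernKL (x / n) p)
      ((Real.log ((x/n) / p) - Real.log ((1 - x/n) / (1 - p))) * (1/n)) x :=
    ((hasDerivAt_bernKL hx0 hx1 hp hp1).comp x ((hasDerivAt_id x).div_const n) :)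
  have d2 : HasDerivAt (fun x : ℝ => bernKL (((R:ℝ) - x) / ((N:ℝ) - n)) p)
      ((Real.log ((((R:ℝ)-x)/((N:ℝ)-n)) / p) -
        Real.log ((1 - ((R:ℝ)-x)/((N:ℝ)-n)) / (1 - p))) * ((0 - 1)/((N:ℝ)-n))) x :=
    ((hasDerivAt_bernKL hq0 hq1 hp hp1).comp x
      (((hasDerivAt_const x (R:ℝ)).sub (hasDerivAt_id x)).div_const ((N:ℝ)-n)) :)
  have hsum := (d1.const_mul (n:ℝ)).add (d2.const_mul ((N:ℝ) - n))
  have heq : Lfun N R n = fun x => (n:ℝ) * bernKL (x / n) p +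
      ((N:ℝ) - n) * bernKL (((R:ℝ) - x) / ((N:ℝ) - n)) p := rfl
  rw [heq]
  refine hsum.congr_deriv ?_
  field_simp
  ring


/-- The function `x ↦ L(x)` is strictly decreasing for `x` below `m = nR/N` and strictly
increasing for `x` above `m`. -/
theorem Lfun_strict_mono (N R n : ℕ) (hR1 : 1 ≤ R) (hRN : R < N)
    (hn1 : 1 ≤ n) (hnN : n < N) :
    (∀ x₁ x₂ : ℝ, max 0 ((n : ℝ) + R - N) ≤ x₁ → x₁ < x₂ → x₂ ≤ (n : ℝ) * R / N →
      Lfun N R n x₂ < Lfun N R n x₁) ∧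
    (∀ x₁ x₂ : ℝ, (n : ℝ) * R / N ≤ x₁ → x₁ < x₂ → x₂ ≤ min (n : ℝ) (R : ℝ) →
      Lfun N R n x₁ < Lfun N R n x₂) := by
  have hN : (0:ℝ) < N := by exact_mod_cast lt_of_le_of_lt (Nat.zero_le R) hRN
  have hn : (0:ℝ) < n := by exact_mod_cast hn1
  have hR : (0:ℝ) < R := by exact_mod_cast hR1
  have hRNr : (R:ℝ) < N := by exact_mod_cast hRN
  have hnNr : (n:ℝ) < N := by exact_mod_cast hnN
  have hNn : (0:ℝ) < (N:ℝ) - n := by linarith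
  set p := (R:ℝ)/N with hpdef
  have hp0 : 0 < p := div_pos hR hN
  have hp1 : p < 1 := (div_lt_one hN).mpr hRNr
  set a := max (0:ℝ) ((n : ℝ) + R - N) with hadef
  set m := (n : ℝ) * R / N with hmdef
  set b := min (n : ℝ) (R : ℝ) with hbdef
  have ham : a < m := by
    apply max_lt
    · positivity
    · rw [lt_div_iff₀ hN]
      nlinarith [mul_pos hNn (sub_pos.mpr hRNr)]
  have hmb : m < b := by
    apply lt_min
    · rw [div_lt_iff₀ hN]; nlinarith
    · rw [div_lt_iff₀ hN]; nlinarith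
  have hcont : Continuous (Lfun N R n) := by
    have hbp := continuous_bernKL p (ne_of_gt hp0) (ne_of_gt (by linarith))
    have heq : Lfun N R n = fun x => (n:ℝ) * bernKL (x / n) p +
        ((N:ℝ) - n) * bernKL (((R:ℝ) - x) / ((N:ℝ) - n)) p := rfl
    rw [heq]
    exact (continuous_const.mul (hbp.comp (continuous_id.div_const _))).add
      (continuous_const.mul (hbp.comp ((continuous_const.sub continuous_id).div_const _)))
  -- derivative and its sign at interior points
  have key : ∀ x : ℝ, a < x → x < b →
      deriv (Lfun N R n) x =
        (Real.log ((x/n) / p) - Real.log ((1 - x/n) / (1 - p))) -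
        (Real.log ((((R:ℝ)-x)/((N:ℝ)-n)) / p) -
         Real.log ((1 - ((R:ℝ)-x)/((N:ℝ)-n)) / (1 - p))) ∧
      0 < x/n ∧ x/n < 1 ∧ 0 < ((R:ℝ)-x)/((N:ℝ)-n) ∧ ((R:ℝ)-x)/((N:ℝ)-n) < 1 := by
    intro x hxa hxb
    have hx0 : 0 < x := lt_of_le_of_lt (le_max_left _ _) hxa
    have hxa' : (n:ℝ) + R - N < x := lt_of_le_of_lt (le_max_right _ _) hxa
    have hxn : x < n := hxb.trans_le' le_rfl |>.trans_le (min_le_left _ _)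
    have hxR : x < R := hxb.trans_le (min_le_right _ _)
    have hph0 : 0 < x/n := div_pos hx0 hn
    have hph1 : x/n < 1 := (div_lt_one hn).mpr hxn
    have hqh0 : 0 < ((R:ℝ)-x)/((N:ℝ)-n) := div_pos (by linarith) hNn
    have hqh1 : ((R:ℝ)-x)/((N:ℝ)-n) < 1 := (div_lt_one hNn).mpr (by linarith)
    have hd := hasDerivAt_Lfun N R n hn hNn (ne_of_gt hph0) (ne_of_gt (by linarith))
      (ne_of_gt hqh0) (ne_of_gt (by linarith)) (ne_of_gt hp0) (ne_of_gt (by linarith))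
    exact ⟨hd.deriv, hph0, hph1, hqh0, hqh1⟩
  have hanti : StrictAntiOn (Lfun N R n) (Set.Icc a m) := by
    apply strictAntiOn_of_deriv_neg (convex_Icc a m) hcont.continuousOn
    intro x hx
    rw [interior_Icc] at hx
    obtain ⟨hxa, hxm⟩ := hx
    obtain ⟨hder, hph0, hph1, hqh0, hqh1⟩ := key x hxa (hxm.trans hmb)
    rw [hder]
    have hlt : x/n < ((R:ℝ)-x)/((N:ℝ)-n) := by
      rw [div_lt_div_iff₀ hn hNn]
      have hxm' : x * N < n * R := (lt_div_iff₀ hN).mp hxm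
      nlinarith
    have h1 : Real.log ((x/n)/p) < Real.log ((((R:ℝ)-x)/((N:ℝ)-n))/p) :=
      Real.log_lt_log (div_pos hph0 hp0) (by gcongr)
    have h2 : Real.log ((1 - ((R:ℝ)-x)/((N:ℝ)-n))/(1-p)) < Real.log ((1 - x/n)/(1-p)) :=
      Real.log_lt_log (div_pos (by linarith) (by linarith)) (by gcongr <;> linarith)
    linarith
  have hmono : StrictMonoOn (Lfun N R n) (Set.Icc m b) := by
    apply strictMonoOn_of_deriv_pos (convex_Icc m b) hcont.continuousOn
    intro x hx
    rw [interior_Icc] at hx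
    obtain ⟨hxm, hxb⟩ := hx
    obtain ⟨hder, hph0, hph1, hqh0, hqh1⟩ := key x (ham.trans hxm) hxb
    rw [hder]
    have hlt : ((R:ℝ)-x)/((N:ℝ)-n) < x/n := by
      rw [div_lt_div_iff₀ hNn hn]
      have hxm' : n * R < x * N := (div_lt_iff₀ hN).mp hxm
      nlinarith
    have h1 : Real.log ((((R:ℝ)-x)/((N:ℝ)-n))/p) < Real.log ((x/n)/p) :=
      Real.log_lt_log (div_pos hqh0 hp0) (by gcongr)
    have h2 : Real.log ((1 - x/n)/(1-p)) < Real.log ((1 - ((R:ℝ)-x)/((N:ℝ)-n))/(1-p)) :=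
      Real.log_lt_log (div_pos (by linarith) (by linarith)) (by gcongr <;> linarith)
    linarith
  constructor
  · intro x₁ x₂ h1 h2 h3
    exact hanti ⟨h1, h2.le.trans h3⟩ ⟨h1.trans h2.le, h3⟩ h2
  · intro x₁ x₂ h1 h2 h3
    exact hmono ⟨h1, h2.le.trans h3⟩ ⟨h1.trans h2.le, h3⟩ h2
end

section
/- For every integer n ≥ 1, every p̄ ∈ (0,1) and every real u with p̄ < u ≤ (n−1)/n: n·K(u, p̄) + 1 ≥ (1−p̄)/(4·(1−u)). -/
private lemma log_le_half (y : ℝ) (hy : 0 < y) : Real.log y ≤ y / 2 := by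
  have h1 : Real.log (Real.sqrt y) ≤ Real.sqrt y - 1 :=
    Real.log_le_sub_one_of_pos (Real.sqrt_pos.2 hy)
  have h2 : Real.log (Real.sqrt y) = Real.log y / 2 := Real.log_sqrt hy.le
  nlinarith [Real.sq_sqrt hy.le, sq_nonneg (Real.sqrt y - 2)]

private lemma log_ge (y : ℝ) (hy : 0 < y) : 1 - 1 / y ≤ Real.log y := by
  have h := Real.log_le_sub_one_of_pos (show (0:ℝ) < 1 / y by positivity)
  rw [Real.log_div one_ne_zero (ne_of_gt hy), Real.log_one] at h
  have : (0:ℝ) < y := hy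
  nlinarith

/-- For every integer `n ≥ 1`, `p̄ ∈ (0,1)` and real `u` with `p̄ < u ≤ (n−1)/n`:
`n·K(u, p̄) + 1 ≥ (1−p̄)/(4(1−u))`. -/
theorem bernKL_lower_upper_tail (n : ℕ) (hn : 1 ≤ n) (p u : ℝ) (hp : p ∈ Set.Ioo (0 : ℝ) 1)
    (hpu : p < u) (hu : u ≤ ((n : ℝ) - 1) / n) :
    (1 - p) / (4 * (1 - u)) ≤ (n : ℝ) * bernKL u p + 1 := by
  obtain ⟨hp0, hp1⟩ := hp
  have hn0 : (0:ℝ) < n := by exact_mod_cast hn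
  have hu0 : 0 < u := hp0.trans hpu
  have hu1 : u < 1 := lt_of_le_of_lt hu (by rw [div_lt_one hn0]; linarith)
  have hs : 0 < 1 - u := by linarith
  have hx : 0 < 1 - p := by linarith
  have hns : 1 ≤ (n:ℝ) * (1 - u) := by
    rw [le_div_iff₀ hn0] at hu
    nlinarith
  -- nonnegativity of KL
  have hK0 : 0 ≤ bernKL u p := by
    have h1 : 1 - p / u ≤ Real.log (u / p) := by
      have h := log_ge (u / p) (div_pos hu0 hp0)
      rw [one_div, inv_div] at h
      exact h
    have h2 : 1 - (1 - p) / (1 - u) ≤ Real.log ((1 - u) / (1 - p)) := by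
      have h := log_ge ((1 - u) / (1 - p)) (div_pos hs hx)
      rw [one_div, inv_div] at h
      exact h
    have e1 : u * (1 - p / u) = u - p := by field_simp
    have e2 : (1 - u) * (1 - (1 - p) / (1 - u)) = p - u := by field_simp; ring
    have h1' := mul_le_mul_of_nonneg_left h1 hu0.le
    have h2' := mul_le_mul_of_nonneg_left h2 hs.le
    rw [e1] at h1'
    rw [e2] at h2'
    unfold bernKL
    linarith
  by_cases hc : 1 - p ≤ 4 * (1 - u)
  · -- easy case: LHS ≤ 1
    rw [div_le_iff₀ (by positivity)]
    nlinarith [mul_nonneg (by linarith : (0:ℝ) ≤ (n:ℝ)) hK0]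
  · push_neg at hc
    have hu34 : (3:ℝ)/4 ≤ u := by linarith
    -- key lower bound on K
    have b1 : u - 1 ≤ u * Real.log u := by
      have h := log_ge u hu0
      have h' := mul_le_mul_of_nonneg_left h hu0.le
      have e : u * (1 - 1 / u) = u - 1 := by field_simp
      linarith [e ▸ h']
    have b2 : (3:ℝ)/4 * (1 - p) ≤ u * (-Real.log p) := by
      have h : Real.log p ≤ p - 1 := Real.log_le_sub_one_of_pos hp0
      have hlp : 0 ≤ -Real.log p := by nlinarith
      nlinarith
    have b3 : -(1 - p) / 2 ≤ (1 - u) * Real.log ((1 - u) / (1 - p)) := by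
      have h : Real.log ((1 - p) / (1 - u)) ≤ ((1 - p) / (1 - u)) / 2 :=
        log_le_half _ (div_pos hx hs)
      have e : Real.log ((1 - u) / (1 - p)) = -Real.log ((1 - p) / (1 - u)) := by
        rw [← Real.log_inv, inv_div]
      rw [e]
      have h' := mul_le_mul_of_nonneg_left h hs.le
      have e2 : (1 - u) * (((1 - p) / (1 - u)) / 2) = (1 - p) / 2 := by
        field_simp
      rw [e2] at h'
      linarith
    have hKlb : (1 - p) / 4 - (1 - u) ≤ bernKL u p := by
      unfold bernKL
      rw [Real.log_div (ne_of_gt hu0) (ne_of_gt hp0)]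
      nlinarith
    rw [div_le_iff₀ (by positivity)]
    nlinarith [mul_nonneg (by linarith : (0:ℝ) ≤ (n:ℝ) * (1 - u) - 1) hK0]
end

section
/- For every integer M ≥ 1, every p̄ ∈ (0,1) and every real u with 1/M ≤ u ≤ p̄: M·K(u, p̄) + 1 ≥ p̄/(4·u). -/
lemma log_le_three_quarters (t : ℝ) (ht : 0 < t) : Real.log t ≤ 3 / 4 * t := by
  have h1 : Real.exp (3 / 8 * t) * Real.exp (3 / 8 * t) = Real.exp (3 / 4 * t) := by
    rw [← Real.exp_add]; ring_nf
  have h2 := Real.add_one_le_exp (3 / 8 * t)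
  have h3 : t ≤ Real.exp (3 / 4 * t) := by
    nlinarith [Real.exp_pos (3 / 8 * t), sq_nonneg (t - 8 / 9)]
  exact (Real.log_le_iff_le_exp ht).mpr h3

/-- For every integer `M ≥ 1`, `p̄ ∈ (0,1)` and real `u` with `1/M ≤ u ≤ p̄`:
`M·K(u, p̄) + 1 ≥ p̄/(4u)`. -/
theorem bernKL_lower_lower_tail (M : ℕ) (hM : 1 ≤ M) (p u : ℝ) (hp : p ∈ Set.Ioo (0 : ℝ) 1)
    (hu1 : 1 / (M : ℝ) ≤ u) (hup : u ≤ p) :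
    p / (4 * u) ≤ (M : ℝ) * bernKL u p + 1 := by
  obtain ⟨hp0, hp1⟩ := hp
  have hM0 : (0 : ℝ) < M := by exact_mod_cast hM
  have hu0 : 0 < u := lt_of_lt_of_le (by positivity) hu1
  have hu1' : u < 1 := lt_of_le_of_lt hup hp1
  have hMu : 1 ≤ (M : ℝ) * u := by
    rw [div_le_iff₀ hM0] at hu1; linarith
  set t : ℝ := p / u with htdef
  have ht1 : 1 ≤ t := (one_le_div hu0).mpr hup
  have ht0 : 0 < t := lt_of_lt_of_le one_pos ht1
  -- second term of KL: (1-u)·log((1-u)/(1-p)) ≥ p - u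
  have hsecond : p - u ≤ (1 - u) * Real.log ((1 - u) / (1 - p)) := by
    have h1u : (0 : ℝ) < 1 - u := by linarith
    have h1p : (0 : ℝ) < 1 - p := by linarith
    have hlog : Real.log ((1 - p) / (1 - u)) ≤ (1 - p) / (1 - u) - 1 :=
      Real.log_le_sub_one_of_pos (by positivity)
    have heq : Real.log ((1 - u) / (1 - p)) = - Real.log ((1 - p) / (1 - u)) := by
      rw [← Real.log_inv, inv_div]
    rw [heq]
    have h2 : (1 - p) / (1 - u) - 1 = (u - p) / (1 - u) := by field_simp; ring
    have h3 : (p - u) / (1 - u) ≤ - Real.log ((1 - p) / (1 - u)) := by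
      rw [h2] at hlog
      have := neg_le_neg hlog
      have e : (p - u) / (1 - u) = -((u - p) / (1 - u)) := by ring
      rw [e]; exact this
    calc p - u = (1 - u) * ((p - u) / (1 - u)) := by field_simp
      _ ≤ (1 - u) * (- Real.log ((1 - p) / (1 - u))) := by
          exact mul_le_mul_of_nonneg_left h3 (le_of_lt h1u)
  have hfirst : u * Real.log (u / p) = - (u * Real.log t) := by
    have : Real.log (u / p) = - Real.log t := by
      rw [htdef, ← Real.log_inv, inv_div]
    rw [this]; ring
  have hK : u * (t - 1 - Real.log t) ≤ bernKL u p := by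
    unfold bernKL
    rw [hfirst]
    have : u * (t - 1) = p - u := by
      rw [htdef]; field_simp
    nlinarith [hsecond]
  have hlt : 0 ≤ t - 1 - Real.log t := by
    have := Real.log_le_sub_one_of_pos ht0
    linarith
  have hMK : t - 1 - Real.log t ≤ (M : ℝ) * bernKL u p := by
    calc t - 1 - Real.log t = 1 * (t - 1 - Real.log t) := by ring
      _ ≤ ((M : ℝ) * u) * (t - 1 - Real.log t) := mul_le_mul_of_nonneg_right hMu hlt
      _ = (M : ℝ) * (u * (t - 1 - Real.log t)) := by ring
      _ ≤ (M : ℝ) * bernKL u p := mul_le_mul_of_nonneg_left hK (le_of_lt hM0)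
  have hlog34 := log_le_three_quarters t ht0
  have hfinal : p / (4 * u) = t / 4 := by rw [htdef]; ring
  rw [hfinal]
  linarith
end

section
/- Let N > n ≥ 1 be integers and let p̂, q̂ be reals with 0 < q̂ ≤ p̂ < 1. Set p̄ := (n·p̂ + (N−n)·q̂)/N. Then n·K(p̂, p̄) + (N−n)·K(q̂, p̄) ≥ (n·(N−n)/N)·(p̂−q̂)²/(2·p̂·(1−q̂)). -/
lemma auxA {y : ℝ} (hy : 0 < y) (hy1 : y ≤ 1) :
    (1 - y) + (1 - y) ^ 2 / 2 ≤ -Real.log y := by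
  have hd : ∀ x ∈ Set.Ioi (0:ℝ),
      HasDerivAt (fun x : ℝ => -Real.log x - (1 - x) - (1 - x) ^ 2 / 2)
        (-(x⁻¹) - (-1) - ((2:ℕ) * (1 - x) ^ 1 * (-1)) / 2) x := by
    intro x hx
    exact (((Real.hasDerivAt_log (ne_of_gt hx)).neg).sub
      ((hasDerivAt_id x).const_sub 1)).sub
      ((((hasDerivAt_id x).const_sub 1).pow 2).div_const 2)
  have h : AntitoneOn (fun x : ℝ => -Real.log x - (1 - x) - (1 - x) ^ 2 / 2) (Set.Ioi 0) := by
    apply antitoneOn_of_deriv_nonpos (convex_Ioi 0)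
    · apply ContinuousOn.sub
      apply ContinuousOn.sub
      · exact (Real.continuousOn_log.mono (fun x hx => ne_of_gt hx)).neg
      · fun_prop
      · fun_prop
    · intro x hx
      rw [interior_Ioi] at hx
      exact (hd x hx).differentiableAt.differentiableWithinAt
    · intro x hx
      rw [interior_Ioi] at hx
      have hx0 : (0:ℝ) < x := hx
      rw [(hd x hx).deriv]
      push_cast
      have h2 : -(x⁻¹) - (-1) - ((2:ℝ) * (1 - x) ^ 1 * (-1)) / 2 = -((x - 1) ^ 2 / x) := by
        field_simp
        ring
      rw [h2]
      exact neg_nonpos.mpr (by positivity)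
  have h2 := h (Set.mem_Ioi.mpr hy) (Set.mem_Ioi.mpr one_pos) hy1
  simp only [Real.log_one] at h2
  norm_num at h2
  linarith

lemma auxB {y : ℝ} (hy : 0 < y) (hy1 : y ≤ 1) :
    (1 - y) ^ 2 / 2 ≤ y * Real.log y + (1 - y) := by
  have hd : ∀ x ∈ Set.Ioi (0:ℝ),
      HasDerivAt (fun x : ℝ => x * Real.log x + (1 - x) - (1 - x) ^ 2 / 2)
        ((1 * Real.log x + x * x⁻¹) + (-1) - ((2:ℕ) * (1 - x) ^ 1 * (-1)) / 2) x := by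
    intro x hx
    exact (((hasDerivAt_id x).mul (Real.hasDerivAt_log (ne_of_gt hx))).add
      ((hasDerivAt_id x).const_sub 1)).sub
      ((((hasDerivAt_id x).const_sub 1).pow 2).div_const 2)
  have h : AntitoneOn (fun x : ℝ => x * Real.log x + (1 - x) - (1 - x) ^ 2 / 2) (Set.Ioi 0) := by
    apply antitoneOn_of_deriv_nonpos (convex_Ioi 0)
    · apply ContinuousOn.sub
      apply ContinuousOn.add
      · exact continuousOn_id.mul (Real.continuousOn_log.mono (fun x hx => ne_of_gt hx))
      · fun_prop
      · fun_prop
    · intro x hx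
      rw [interior_Ioi] at hx
      exact (hd x hx).differentiableAt.differentiableWithinAt
    · intro x hx
      rw [interior_Ioi] at hx
      have hx0 : (0:ℝ) < x := hx
      rw [(hd x hx).deriv]
      have hxi : x * x⁻¹ = 1 := mul_inv_cancel₀ hx0.ne'
      have hlog : Real.log x ≤ x - 1 := Real.log_le_sub_one_of_pos hx0
      push_cast
      nlinarith
  have h2 := h (Set.mem_Ioi.mpr hy) (Set.mem_Ioi.mpr one_pos) hy1
  simp only [Real.log_one] at h2
  norm_num at h2
  linarith

/-- Pinsker-type bound when `p ≤ u`. -/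
lemma bernKL_lower_left {u p : ℝ} (hp : 0 < p) (hpu : p ≤ u) (hu : u < 1) :
    (u - p) ^ 2 / (2 * u * (1 - p)) ≤ bernKL u p := by
  have hu0 : 0 < u := lt_of_lt_of_le hp hpu
  have h1p : 0 < 1 - p := by linarith
  have h1u : 0 < 1 - u := by linarith
  -- first term
  have hy1 : 0 < p / u := div_pos hp hu0
  have hy1' : p / u ≤ 1 := (div_le_one hu0).mpr hpu
  have hA := auxA hy1 hy1'
  have hlog1 : -Real.log (p / u) = Real.log (u / p) := by
    rw [← Real.log_inv]
    congr 1
    field_simp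
  rw [hlog1] at hA
  have key1 : (u - p) + (u - p) ^ 2 / (2 * u) ≤ u * Real.log (u / p) := by
    have := mul_le_mul_of_nonneg_left hA (le_of_lt hu0)
    have e : u * ((1 - p / u) + (1 - p / u) ^ 2 / 2) = (u - p) + (u - p) ^ 2 / (2 * u) := by
      field_simp
    linarith [e ▸ this]
  -- second term
  have hy2 : 0 < (1 - u) / (1 - p) := div_pos h1u h1p
  have hy2' : (1 - u) / (1 - p) ≤ 1 := (div_le_one h1p).mpr (by linarith)
  have hB := auxB hy2 hy2'
  have key2 : (u - p) ^ 2 / (2 * (1 - p)) - (u - p) ≤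
      (1 - u) * Real.log ((1 - u) / (1 - p)) := by
    have := mul_le_mul_of_nonneg_left hB (le_of_lt h1p)
    have e : (1 - p) * ((1 - (1 - u) / (1 - p)) ^ 2 / 2) = (u - p) ^ 2 / (2 * (1 - p)) := by
      field_simp
      ring
    have e2 : (1 - p) * ((1 - u) / (1 - p) * Real.log ((1 - u) / (1 - p)) + (1 - (1 - u) / (1 - p)))
        = (1 - u) * Real.log ((1 - u) / (1 - p)) + (u - p) := by
      field_simp
      ring
    linarith [e ▸ e2 ▸ this]
  have hsum : (u - p) ^ 2 / (2 * u) + (u - p) ^ 2 / (2 * (1 - p)) ≤ bernKL u p := by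
    unfold bernKL
    linarith
  refine le_trans ?_ hsum
  rw [div_add_div _ _ (by positivity) (by positivity), div_le_div_iff₀ (by positivity) (by positivity)]
  nlinarith [mul_nonneg (mul_nonneg (sq_nonneg (u - p)) (le_of_lt (mul_pos hu0 h1p)))
    (sub_nonneg.mpr hpu)]

/-- Pinsker-type bound when `u ≤ p`. -/
lemma bernKL_lower_right {u p : ℝ} (hu : 0 < u) (hup : u ≤ p) (hp : p < 1) :
    (p - u) ^ 2 / (2 * p * (1 - u)) ≤ bernKL u p := by
  have h := bernKL_lower_left (u := 1 - u) (p := 1 - p) (by linarith) (by linarith) (by linarith)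
  have he : bernKL (1 - u) (1 - p) = bernKL u p := by
    simp only [bernKL, sub_sub_cancel]
    ring
  rw [he] at h
  have he2 : ((1 - u) - (1 - p)) ^ 2 / (2 * (1 - u) * (1 - (1 - p))) =
      (p - u) ^ 2 / (2 * p * (1 - u)) := by ring_nf
  rw [he2] at h
  exact h

/-- Let `N > n ≥ 1` be integers and `0 < q̂ ≤ p̂ < 1` be reals; set
`p̄ := (n·p̂ + (N−n)·q̂)/N`.  Then
`n·K(p̂, p̄) + (N−n)·K(q̂, p̄) ≥ (n(N−n)/N)·(p̂−q̂)²/(2p̂(1−q̂))`. -/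
theorem bernKL_two_sample_lower (N n : ℕ) (hn : 1 ≤ n) (hnN : n < N)
    (phat qhat : ℝ) (hq : 0 < qhat) (hqp : qhat ≤ phat) (hp : phat < 1) :
    (n : ℝ) * ((N : ℝ) - n) / N * (phat - qhat) ^ 2 / (2 * phat * (1 - qhat)) ≤
      (n : ℝ) * bernKL phat (((n : ℝ) * phat + ((N : ℝ) - n) * qhat) / N) +
        ((N : ℝ) - n) * bernKL qhat (((n : ℝ) * phat + ((N : ℝ) - n) * qhat) / N) := by
  set a : ℝ := (n : ℝ) with ha_def
  set b : ℝ := (N : ℝ) - n with hb_def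
  have ha : 1 ≤ a := by simp only [ha_def]; exact_mod_cast hn
  have hb : 1 ≤ b := by
    have : (n : ℝ) + 1 ≤ N := by exact_mod_cast hnN
    simp only [hb_def]; linarith
  have hN : (N : ℝ) = a + b := by simp [ha_def, hb_def]
  have hN0 : (0:ℝ) < N := by rw [hN]; linarith
  set pb : ℝ := (a * phat + b * qhat) / N with hpb_def
  have hq_pb : qhat ≤ pb := by
    rw [hpb_def, le_div_iff₀ hN0, hN]
    nlinarith
  have hpb_p : pb ≤ phat := by
    rw [hpb_def, div_le_iff₀ hN0, hN]
    nlinarith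
  have hpb0 : 0 < pb := lt_of_lt_of_le hq hq_pb
  have hpb1 : pb < 1 := lt_of_le_of_lt hpb_p hp
  have h1 := bernKL_lower_left hpb0 hpb_p hp
  have h2 := bernKL_lower_right hq hq_pb hpb1
  have hp0 : 0 < phat := lt_of_lt_of_le hq hqp
  have h1q : 0 < 1 - qhat := by linarith
  have h1pb : 0 < 1 - pb := by linarith
  -- weaken denominators
  have w1 : (phat - pb) ^ 2 / (2 * phat * (1 - qhat)) ≤
      (phat - pb) ^ 2 / (2 * phat * (1 - pb)) := by
    apply div_le_div_of_nonneg_left (by positivity) (by positivity)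
    nlinarith
  have w2 : (pb - qhat) ^ 2 / (2 * phat * (1 - qhat)) ≤
      (pb - qhat) ^ 2 / (2 * pb * (1 - qhat)) := by
    apply div_le_div_of_nonneg_left (by positivity) (by positivity)
    nlinarith
  have k1 : (phat - pb) ^ 2 / (2 * phat * (1 - qhat)) ≤ bernKL phat pb := le_trans w1 h1
  have k2 : (pb - qhat) ^ 2 / (2 * phat * (1 - qhat)) ≤ bernKL qhat pb := le_trans w2 h2
  have e1 : phat - pb = b * (phat - qhat) / N := by
    rw [hpb_def, hN]; field_simp; ring
  have e2 : pb - qhat = a * (phat - qhat) / N := by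
    rw [hpb_def, hN]; field_simp; ring
  have ha0 : 0 < a := by linarith
  have hb0 : 0 < b := by linarith
  have final : a * b / N * (phat - qhat) ^ 2 / (2 * phat * (1 - qhat)) =
      a * ((phat - pb) ^ 2 / (2 * phat * (1 - qhat))) +
      b * ((pb - qhat) ^ 2 / (2 * phat * (1 - qhat))) := by
    rw [e1, e2, hN]
    field_simp
    ring
  calc a * b / N * (phat - qhat) ^ 2 / (2 * phat * (1 - qhat))
      = a * ((phat - pb) ^ 2 / (2 * phat * (1 - qhat))) +
        b * ((pb - qhat) ^ 2 / (2 * phat * (1 - qhat))) := final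
    _ ≤ a * bernKL phat pb + b * bernKL qhat pb := by
        apply add_le_add
        · exact mul_le_mul_of_nonneg_left k1 (le_of_lt ha0)
        · exact mul_le_mul_of_nonneg_left k2 (le_of_lt hb0)
end
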